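/- If c ∈ C_m = {c ∈ R : Kdim(R/cR) < m}, then c is invertible in R^e: its inverse c^{-1} in Q lies in R^e. -/
import Mathlib


set_option linter.unusedVariables false

/-- `devLE k A` : the deviation (in the Gabriel–Rentschler sense) of the
poset `A` is `≤ k` (for `k : ℕ`).  `devLE 0 A` says every descending chain
eventually stabilizes (DCC), and `devLE (k+1) A` says that in any descending
chain all but finitely many of the factor intervals have deviation `≤ k`. -/
def devLE : ℕ → (A : Type*) → [inst : Preorder A] → Prop
  | 0, A, _ => ∀ f : ℕ → A, Antitone f → ∃ N, ∀ i, N ≤ i → f (i + 1) = f i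
  | (k+1), A, _ => ∀ f : ℕ → A, Antitone f →
      ∃ N, ∀ i, N ≤ i → devLE k (Set.Icc (f (i + 1)) (f i))

/-- The Gabriel–Rentschler Krull dimension of the right `R`-module `M`
(a module over `Rᵐᵒᵖ`) is `≤ k` : the deviation of its submodule lattice is `≤ k`. -/
def kdimLE (R M : Type*) [Ring R] [AddCommGroup M] [Module Rᵐᵒᵖ M] (k : ℕ) : Prop :=
  devLE k (Submodule Rᵐᵒᵖ M)

/-- `c` is a regular element of `R` (neither a left nor a right zero divisor). -/
def regElem (R : Type*) [Ring R] (c : R) : Prop :=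
  (∀ x : R, c * x = 0 → x = 0) ∧ (∀ x : R, x * c = 0 → x = 0)

/-- `C_m = {c ∈ R | Kdim(R/cR) < m}` (for `0 < m`, `Kdim < m` is `Kdim ≤ m-1`). -/
def rCm (R : Type*) [Ring R] (m : ℕ) : Set R :=
  {c | kdimLE R (R ⧸ Submodule.span Rᵐᵒᵖ ({c} : Set R)) (m - 1)}

/-- The m-Gabriel filter `g = {right ideals I | Kdim(R/I) < m}`. -/
def gFilt (R : Type*) [Ring R] (m : ℕ) : Set (Submodule Rᵐᵒᵖ R) :=
  {I | kdimLE R (R ⧸ I) (m - 1)}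

/-- A right ideal `P` is a (two-sided) prime ideal of `R`. -/
def isTwoSidedPrime (R : Type*) [Ring R] (P : Submodule Rᵐᵒᵖ R) : Prop :=
  (∀ a ∈ P, ∀ r : R, r * a ∈ P) ∧ P ≠ ⊤ ∧
    ∀ a b : R, (∀ r : R, a * r * b ∈ P) → a ∈ P ∨ b ∈ P

/-- `c ∈ C(P)` : `c` is regular modulo `P`. -/
def regModP (R : Type*) [Ring R] (P : Submodule Rᵐᵒᵖ R) (c : R) : Prop :=
  ∀ x : R, (c * x ∈ P → x ∈ P) ∧ (x * c ∈ P → x ∈ P)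

/-- `X_m` : the set of (two-sided) prime ideals `P` with `Kdim(R/P) = m`. -/
def xSet (R : Type*) [Ring R] (m : ℕ) : Set (Submodule Rᵐᵒᵖ R) :=
  {P | isTwoSidedPrime R P ∧ kdimLE R (R ⧸ P) m ∧ ¬ kdimLE R (R ⧸ P) (m - 1)}

/-- `V_m = ⋂_{P ∈ X_m} C(P)`. -/
def vSet (R : Type*) [Ring R] (m : ℕ) : Set R :=
  {v | ∀ P ∈ xSet R m, regModP R P v}

/-- Left multiplication by `a` as a right-module (`Rᵐᵒᵖ`-module) endomorphism of `R`. -/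
def lmulHom (R : Type*) [Ring R] (a : R) : R →ₗ[Rᵐᵒᵖ] R where
  toFun x := a * x
  map_add' x y := mul_add a x y
  map_smul' r x := by
    simp [MulOpposite.smul_eq_mul_unop, mul_assoc]

/-- `Q` is a classical right quotient ring of `R` via `f : R →+* Q` :
`f` is injective, regular elements of `R` become units in `Q`, and every
element of `Q` is a right fraction `f a * (f s)⁻¹`. -/
def isRightQuotientRing (R Q : Type*) [Ring R] [Ring Q] (f : R →+* Q) : Prop :=
  Function.Injective f ∧ (∀ s : R, regElem R s → IsUnit (f s)) ∧
    ∀ q : Q, ∃ a s : R, regElem R s ∧ q * f s = f a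

/-- `R^e = {q ∈ Q | qJ ⊆ R for some J in the m-Gabriel filter}`, as a subset of `Q`. -/
def reSet (R Q : Type*) [Ring R] [Ring Q] (f : R →+* Q) (m : ℕ) : Set Q :=
  {q | ∃ J ∈ gFilt R m, ∀ j ∈ J, ∃ r : R, q * f j = f r}

/-- The extension `A·R^e` of a set `A ⊆ R` : the additive subgroup of `Q`
generated by products `f a * q` with `a ∈ A`, `q ∈ R^e` (a right ideal of `R^e`). -/
def extSet (R Q : Type*) [Ring R] [Ring Q] (f : R →+* Q) (m : ℕ) (A : Set R) : Set Q :=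
  (AddSubgroup.closure {x : Q | ∃ a ∈ A, ∃ q ∈ reSet R Q f m, x = f a * q} : Set Q)

/-- The right `R`-module structure on `Q` induced by `f : R →+* Q`. -/
def qMod (R Q : Type*) [Ring R] [Ring Q] (f : R →+* Q) : Module Rᵐᵒᵖ Q :=
  Module.compHom Q (RingHom.op f)


universe u v

theorem devLE_transfer : ∀ (k : ℕ) {A : Type u} {B : Type v} [Preorder A] [Preorder B]
    (g : A → B), Monotone g → (∀ x y : A, x ≤ y → g x = g y → x = y) →
    devLE k B → devLE k A := by
  intro k
  induction k with
  | zero =>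
    intro A B _ _ g hg hinj hB f hf
    obtain ⟨N, hN⟩ := hB (fun i => g (f i)) (fun i j hij => hg (hf hij))
    exact ⟨N, fun i hi => hinj _ _ (hf (Nat.le_succ i)) (hN i hi)⟩
  | succ k ih =>
    intro A B _ _ g hg hinj hB f hf
    obtain ⟨N, hN⟩ := hB (fun i => g (f i)) (fun i j hij => hg (hf hij))
    refine ⟨N, fun i hi => ?_⟩
    exact ih (fun x : Set.Icc (f (i+1)) (f i) =>
        (⟨g x.1, hg x.2.1, hg x.2.2⟩ : Set.Icc (g (f (i+1))) (g (f i))))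
      (fun x y hxy => hg hxy)
      (fun x y hxy he => Subtype.ext (hinj _ _ hxy (congrArg Subtype.val he)))
      (hN i hi)

theorem devLE_of_subsingleton : ∀ (k : ℕ) (A : Type u) [Preorder A] [Subsingleton A], devLE k A := by
  intro k
  induction k with
  | zero => intro A _ _ f hf; exact ⟨0, fun i _ => Subsingleton.elim _ _⟩
  | succ k ih =>
    intro A _ _ f hf
    refine ⟨0, fun i _ => ?_⟩
    haveI : Subsingleton (Set.Icc (f (i+1)) (f i)) :=
      ⟨fun a b => Subtype.ext (congrArg Subtype.val (Subsingleton.elim a b))⟩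
    exact ih _

theorem devLE_Icc_self {A : Type u} [PartialOrder A] (k : ℕ) (a : A) :
    devLE k (Set.Icc a a) := by
  haveI : Subsingleton (Set.Icc a a) :=
    ⟨fun x y => Subtype.ext (le_antisymm (x.2.2.trans y.2.1) (y.2.2.trans x.2.1))⟩
  exact devLE_of_subsingleton k _

theorem devLE_succ_of {A : Type u} [Preorder A] {k : ℕ} (h : devLE k A) : devLE (k+1) A := by
  intro f hf
  refine ⟨0, fun i _ => ?_⟩
  exact devLE_transfer k (fun x : Set.Icc (f (i+1)) (f i) => x.1) (fun x y hxy => hxy)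
    (fun x y hxy he => Subtype.ext he) h

theorem devLE_mono {A : Type u} [Preorder A] {k k' : ℕ} (hk : k ≤ k') (h : devLE k A) :
    devLE k' A := by
  induction hk with
  | refl => exact h
  | step h' ih => exact devLE_succ_of ih

theorem devLE_prod : ∀ (k : ℕ) {A : Type u} {B : Type v} [Preorder A] [Preorder B],
    devLE k A → devLE k B → devLE k (A × B) := by
  intro k
  induction k with
  | zero =>
    intro A B _ _ hA hB f hf
    obtain ⟨N₁, h₁⟩ := hA (fun i => (f i).1) (fun i j hij => (hf hij).1)
    obtain ⟨N₂, h₂⟩ := hB (fun i => (f i).2) (fun i j hij => (hf hij).2)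
    exact ⟨max N₁ N₂, fun i hi => Prod.ext_iff.mpr
      ⟨h₁ i (le_trans (le_max_left _ _) hi), h₂ i (le_trans (le_max_right _ _) hi)⟩⟩
  | succ k ih =>
    intro A B _ _ hA hB f hf
    obtain ⟨N₁, h₁⟩ := hA (fun i => (f i).1) (fun i j hij => (hf hij).1)
    obtain ⟨N₂, h₂⟩ := hB (fun i => (f i).2) (fun i j hij => (hf hij).2)
    refine ⟨max N₁ N₂, fun i hi => ?_⟩
    have d1 := h₁ i (le_trans (le_max_left _ _) hi)
    have d2 := h₂ i (le_trans (le_max_right _ _) hi)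
    refine devLE_transfer k
      (fun x : Set.Icc (f (i+1)) (f i) =>
        ((⟨x.1.1, x.2.1.1, x.2.2.1⟩ : Set.Icc (f (i+1)).1 (f i).1),
         (⟨x.1.2, x.2.1.2, x.2.2.2⟩ : Set.Icc (f (i+1)).2 (f i).2)))
      (fun x y hxy => by
        have h := Prod.le_def.mp (Subtype.coe_le_coe.mpr hxy)
        exact Prod.le_def.mpr ⟨Subtype.mk_le_mk.mpr h.1, Subtype.mk_le_mk.mpr h.2⟩)
      (fun x y hxy he => ?_) (ih d1 d2)
    have e1 : x.1.1 = y.1.1 := congrArg Subtype.val (congrArg Prod.fst he)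
    have e2 : x.1.2 = y.1.2 := congrArg Subtype.val (congrArg Prod.snd he)
    exact Subtype.ext (Prod.ext_iff.mpr ⟨e1, e2⟩)

theorem devLE_Icc_compose {A : Type u} [Lattice A] [IsModularLattice A] (k : ℕ) {a b c : A}
    (hab : a ≤ b) (hbc : b ≤ c)
    (h1 : devLE k (Set.Icc a b)) (h2 : devLE k (Set.Icc b c)) : devLE k (Set.Icc a c) := by
  refine devLE_transfer k
    (fun x : Set.Icc a c =>
      ((⟨x.1 ⊓ b, le_inf x.2.1 hab, inf_le_right⟩ : Set.Icc a b),
       (⟨x.1 ⊔ b, le_sup_right, sup_le x.2.2 hbc⟩ : Set.Icc b c)))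
    (fun x y hxy => by
      have h : (x : A) ≤ y := Subtype.coe_le_coe.mpr hxy
      exact Prod.le_def.mpr ⟨Subtype.mk_le_mk.mpr (inf_le_inf_right _ h),
        Subtype.mk_le_mk.mpr (sup_le_sup_right h _)⟩)
    (fun x y hxy he => ?_) (devLE_prod k h1 h2)
  have e1 : x.1 ⊓ b = y.1 ⊓ b := congrArg (fun p => (Prod.fst p).val) he
  have e2 : x.1 ⊔ b = y.1 ⊔ b := congrArg (fun p => (Prod.snd p).val) he
  apply Subtype.ext
  have hxy' : (x.1 : A) ≤ y.1 := hxy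
  have step1 : (y.1 : A) = (x.1 ⊔ b) ⊓ y.1 := by
    rw [e2]; exact (inf_eq_right.mpr le_sup_left).symm
  have step2 : (x.1 ⊔ b) ⊓ y.1 = x.1 ⊔ (b ⊓ y.1) := sup_inf_assoc_of_le b hxy'
  have step3 : b ⊓ y.1 ≤ x.1 := by
    have : b ⊓ (y.1 : A) = b ⊓ x.1 := by rw [inf_comm, ← e1, inf_comm]
    rw [this]; exact inf_le_right
  have : (y.1 : A) ≤ x.1 := by
    rw [step1, step2]; exact sup_le le_rfl step3
  exact le_antisymm hxy' this

theorem devLE_of_Icc_bot_top {A : Type u} [Preorder A] [OrderBot A] [OrderTop A] (k : ℕ)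
    (h : devLE k (Set.Icc (⊥ : A) ⊤)) : devLE k A :=
  devLE_transfer k (fun x : A => (⟨x, bot_le, le_top⟩ : Set.Icc (⊥ : A) ⊤))
    (fun x y hxy => hxy) (fun x y hxy he => congrArg Subtype.val he) h

section ModHelpers

variable {R : Type} [Ring R]

theorem mul_right_mem' {p : Submodule Rᵐᵒᵖ R} {x : R} (hx : x ∈ p) (r : R) : x * r ∈ p :=
  p.smul_mem (MulOpposite.op r) hx

theorem span_singleton_eq_lmul_range (c : R) :
    Submodule.span Rᵐᵒᵖ ({c} : Set R) = LinearMap.range (lmulHom R c) := by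
  ext x
  rw [Submodule.mem_span_singleton, LinearMap.mem_range]
  constructor
  · rintro ⟨a, rfl⟩; exact ⟨a.unop, rfl⟩
  · rintro ⟨y, rfl⟩; exact ⟨MulOpposite.op y, rfl⟩

theorem devIcc_of_quot (k : ℕ) (C : Submodule Rᵐᵒᵖ R)
    (h : devLE k (Submodule Rᵐᵒᵖ (R ⧸ C))) :
    devLE k (Set.Icc C (⊤ : Submodule Rᵐᵒᵖ R)) := by
  refine devLE_transfer k (fun A : Set.Icc C (⊤ : Submodule Rᵐᵒᵖ R) => Submodule.map C.mkQ A.1)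
    (fun x y hxy => Submodule.map_mono hxy) (fun x y hxy he => ?_) h
  have h2 := congrArg (Submodule.comap C.mkQ) he
  rw [Submodule.comap_map_mkQ, Submodule.comap_map_mkQ,
    sup_eq_right.mpr x.2.1, sup_eq_right.mpr y.2.1] at h2
  exact Subtype.ext h2

theorem devIcc_comap (k : ℕ) (φ : R →ₗ[Rᵐᵒᵖ] R) {a b a' : Submodule Rᵐᵒᵖ R}
    (ha : a' ≤ Submodule.comap φ a) (hb : b ≤ LinearMap.range φ)
    (h : devLE k (Set.Icc a' (⊤ : Submodule Rᵐᵒᵖ R))) : devLE k (Set.Icc a b) := by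
  refine devLE_transfer k
    (fun A : Set.Icc a b => (⟨Submodule.comap φ A.1,
      le_trans ha (Submodule.comap_mono A.2.1), le_top⟩ :
      Set.Icc a' (⊤ : Submodule Rᵐᵒᵖ R)))
    (fun x y hxy => Subtype.mk_le_mk.mpr (Submodule.comap_mono (Subtype.coe_le_coe.mpr hxy)))
    (fun x y hxy he => ?_) h
  have h2 := congrArg (fun z => Submodule.map φ (Subtype.val z)) he
  simp only at h2
  rw [Submodule.map_comap_eq, Submodule.map_comap_eq,
    inf_eq_right.mpr (le_trans x.2.2 hb), inf_eq_right.mpr (le_trans y.2.2 hb)] at h2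
  exact Subtype.ext h2

theorem devIcc_map_ker (k : ℕ) (φ : R →ₗ[Rᵐᵒᵖ] R) {b : Submodule Rᵐᵒᵖ R}
    (hb : LinearMap.range φ ≤ b) (h : devLE k (Set.Icc (⊥ : Submodule Rᵐᵒᵖ R) b)) :
    devLE k (Set.Icc (LinearMap.ker φ) (⊤ : Submodule Rᵐᵒᵖ R)) := by
  refine devLE_transfer k
    (fun A : Set.Icc (LinearMap.ker φ) (⊤ : Submodule Rᵐᵒᵖ R) =>
      (⟨Submodule.map φ A.1, bot_le, le_trans LinearMap.map_le_range hb⟩ :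
        Set.Icc (⊥ : Submodule Rᵐᵒᵖ R) b))
    (fun x y hxy => Subtype.mk_le_mk.mpr (Submodule.map_mono (Subtype.coe_le_coe.mpr hxy)))
    (fun x y hxy he => ?_) h
  have h2 := congrArg (fun z => Submodule.comap φ (Subtype.val z)) he
  simp only at h2
  rw [Submodule.comap_map_eq, Submodule.comap_map_eq,
    sup_eq_left.mpr x.2.1, sup_eq_left.mpr y.2.1] at h2
  exact Subtype.ext h2

theorem devIcc_map_img (k : ℕ) (φ : R →ₗ[Rᵐᵒᵖ] R) (N : Submodule Rᵐᵒᵖ R)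
    (h : devLE k (Set.Icc (⊥ : Submodule Rᵐᵒᵖ R) N)) :
    devLE k (Set.Icc (⊥ : Submodule Rᵐᵒᵖ R) (Submodule.map φ N)) := by
  have key : ∀ x : Set.Icc (⊥ : Submodule Rᵐᵒᵖ R) (Submodule.map φ N),
      Submodule.map φ (Submodule.comap φ x.1 ⊓ N) = x.1 := by
    intro x
    apply le_antisymm
    · exact le_trans (Submodule.map_mono inf_le_left) (Submodule.map_comap_le φ x.1)
    · intro v hv
      obtain ⟨u, huN, rfl⟩ := x.2.2 hv
      exact ⟨u, ⟨hv, huN⟩, rfl⟩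
  refine devLE_transfer k
    (fun x : Set.Icc (⊥ : Submodule Rᵐᵒᵖ R) (Submodule.map φ N) =>
      (⟨Submodule.comap φ x.1 ⊓ N, bot_le, inf_le_right⟩ :
        Set.Icc (⊥ : Submodule Rᵐᵒᵖ R) N))
    (fun x y hxy => Subtype.mk_le_mk.mpr
      (inf_le_inf_right _ (Submodule.comap_mono (Subtype.coe_le_coe.mpr hxy))))
    (fun x y hxy he => ?_) h
  have h2 := congrArg (fun z => Submodule.map φ (Subtype.val z)) he
  simp only at h2
  rw [key x, key y] at h2
  exact Subtype.ext h2

theorem devIcc_inf (k : ℕ) {s : Submodule Rᵐᵒᵖ R} (K : Submodule Rᵐᵒᵖ R)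
    (h : devLE k (Set.Icc s (⊤ : Submodule Rᵐᵒᵖ R))) :
    devLE k (Set.Icc (K ⊓ s) K) := by
  refine devLE_transfer k
    (fun x : Set.Icc (K ⊓ s) K =>
      (⟨x.1 ⊔ s, le_sup_right, le_top⟩ : Set.Icc s (⊤ : Submodule Rᵐᵒᵖ R)))
    (fun x y hxy => Subtype.mk_le_mk.mpr (sup_le_sup_right (Subtype.coe_le_coe.mpr hxy) _))
    (fun x y hxy he => ?_) h
  have hval : x.1 ⊔ s = y.1 ⊔ s := congrArg Subtype.val he
  have hxy' : (x.1 : Submodule Rᵐᵒᵖ R) ≤ y.1 := hxy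
  apply Subtype.ext
  have step1 : (y.1 : Submodule Rᵐᵒᵖ R) = (x.1 ⊔ s) ⊓ y.1 := by
    rw [hval]; exact (inf_eq_right.mpr le_sup_left).symm
  have step2 : (x.1 ⊔ s) ⊓ y.1 = x.1 ⊔ (s ⊓ y.1) := sup_inf_assoc_of_le s hxy'
  have step3 : s ⊓ y.1 ≤ x.1 := by
    refine le_trans (le_trans (inf_le_inf_left s y.2.2) ?_) x.2.1
    rw [inf_comm]
  have : (y.1 : Submodule Rᵐᵒᵖ R) ≤ x.1 := by
    rw [step1, step2]; exact sup_le le_rfl step3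
  exact le_antisymm hxy' this

end ModHelpers

section Main

variable {R : Type} [Ring R]

theorem swap_pow (s b : R) : ∀ j : ℕ, (s * b)^(j+1) = s * (b*s)^j * b := by
  intro j
  induction j with
  | zero => simp
  | succ j ih =>
    rw [pow_succ, ih, pow_succ]
    simp [mul_assoc]

theorem kdim_full_of_small_ideal [IsNoetherian Rᵐᵒᵖ R]
    (hprime : ∀ a b : R, (∀ r : R, a * r * b = 0) → a = 0 ∨ b = 0)
    (d : ℕ) (W : Submodule Rᵐᵒᵖ R) (hW : W ≠ ⊥)
    (hdW : devLE d (Set.Icc (⊥ : Submodule Rᵐᵒᵖ R) W)) :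
    devLE d (Submodule Rᵐᵒᵖ R) := by
  classical
  set S : Set (Submodule Rᵐᵒᵖ R) :=
    {A | devLE d (Set.Icc (⊥ : Submodule Rᵐᵒᵖ R) A)} with hSdef
  obtain ⟨N, hNS, hNmax⟩ := (set_has_maximal_iff_noetherian.mpr inferInstance) S ⟨W, hdW⟩
  have hsup : ∀ A B : Submodule Rᵐᵒᵖ R, A ∈ S → B ∈ S → A ⊔ B ∈ S := by
    intro A B hA hB
    have hmid : devLE d (Set.Icc A (A ⊔ B)) := by
      refine devLE_transfer d (fun x : Set.Icc A (A ⊔ B) =>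
        (⟨x.1 ⊓ B, bot_le, inf_le_right⟩ : Set.Icc (⊥ : Submodule Rᵐᵒᵖ R) B))
        (fun x y hxy => Subtype.mk_le_mk.mpr
          (inf_le_inf_right _ (Subtype.coe_le_coe.mpr hxy)))
        (fun x y hxy he => ?_) hB
      have e1 : x.1 ⊓ B = y.1 ⊓ B := congrArg Subtype.val he
      have hxy' : (x.1 : Submodule Rᵐᵒᵖ R) ≤ y.1 := hxy
      apply Subtype.ext
      have step1 : (y.1 : Submodule Rᵐᵒᵖ R) = (A ⊔ B) ⊓ y.1 :=
        (inf_eq_right.mpr y.2.2).symm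
      have step2 : (A ⊔ B) ⊓ y.1 = A ⊔ (B ⊓ y.1) := sup_inf_assoc_of_le B y.2.1
      have step3 : B ⊓ y.1 ≤ x.1 := by
        rw [inf_comm, ← e1]; exact inf_le_left
      have : (y.1 : Submodule Rᵐᵒᵖ R) ≤ x.1 := by
        rw [step1, step2]; exact sup_le x.2.1 step3
      exact le_antisymm hxy' this
    exact devLE_Icc_compose d bot_le le_sup_left hA hmid
  have hle : ∀ A ∈ S, A ≤ N := by
    intro A hA
    by_contra hnle
    exact hNmax _ (hsup N A hNS hA) (left_lt_sup.mpr hnle)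
  have hN0 : N ≠ ⊥ := by
    intro h
    exact hW (le_bot_iff.mp (h ▸ hle W hdW))
  have htwo : ∀ r x : R, x ∈ N → r * x ∈ N := by
    intro r x hx
    have hmap : Submodule.map (lmulHom R r) N ≤ N := hle _ (devIcc_map_img d (lmulHom R r) N hNS)
    exact hmap ⟨x, hx, rfl⟩
  have hess : ∀ K : Submodule Rᵐᵒᵖ R, K ≠ ⊥ → K ⊓ N ≠ ⊥ := by
    intro K hK h0
    obtain ⟨x, hxK, hx0⟩ := (Submodule.ne_bot_iff K).mp hK
    obtain ⟨u, huN, hu0⟩ := (Submodule.ne_bot_iff N).mp hN0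
    refine hx0 (Or.resolve_right (hprime x u fun r => ?_) hu0)
    have h1 : x * r * u ∈ K := by
      rw [mul_assoc]; exact mul_right_mem' hxK (r * u)
    have h2 : x * r * u ∈ N := htwo (x * r) u huN
    have : x * r * u ∈ K ⊓ N := ⟨h1, h2⟩
    rw [h0] at this
    simpa using this
  -- Utumi: every nonzero right ideal contains a non-nilpotent element
  have hutumi : ∀ B : Submodule Rᵐᵒᵖ R, B ≠ ⊥ → ∃ z, z ∈ B ∧ ∀ k : ℕ, z^(k+1) ≠ 0 := by
    intro B hB
    obtain ⟨b₀, hb₀B, hb₀⟩ := (Submodule.ne_bot_iff B).mp hB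
    by_contra hcon
    push_neg at hcon
    have nilLeft : ∀ s : R, ∃ k, (s * b₀)^(k+1) = 0 := by
      intro s
      obtain ⟨k, hk⟩ := hcon (b₀ * s) (mul_right_mem' hb₀B s)
      exact ⟨k + 1, by rw [swap_pow, hk, mul_zero, zero_mul]⟩
    set F : Set (Submodule Rᵐᵒᵖ R) :=
      {A | ∃ s : R, s * b₀ ≠ 0 ∧ A = LinearMap.ker (lmulHom R (s * b₀))} with hFdef
    have hFne : F.Nonempty := ⟨_, 1, by simpa using hb₀, rfl⟩
    obtain ⟨Am, hAmF, hAmax⟩ := (set_has_maximal_iff_noetherian.mpr inferInstance) F hFne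
    obtain ⟨s₀, hz0, rfl⟩ := hAmF
    set z := s₀ * b₀ with hzdef
    have hzrz : ∀ r : R, z * r * z = 0 := by
      intro r
      by_cases hw : r * z = 0
      · rw [mul_assoc, hw, mul_zero]
      · set w := r * z with hwdef
        have hwform : w = (r * s₀) * b₀ := by rw [hwdef, hzdef, mul_assoc]
        obtain ⟨k₀, hk₀⟩ := nilLeft (r * s₀)
        have hex : ∃ k, w^(k+1) = 0 := ⟨k₀, by rw [hwform]; exact hk₀⟩
        set k := Nat.find hex with hkdef
        have hk : w^(k+1) = 0 := Nat.find_spec hex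
        have hkpos : k ≠ 0 := by
          intro h0
          rw [h0, zero_add, pow_one] at hk
          exact hw hk
        have hkk : k - 1 + 1 = k := by omega
        have hwk : w^k ≠ 0 := by
          have hmin := Nat.find_min hex (m := k - 1) (by omega)
          rw [hkk] at hmin
          exact hmin
        have hker1 : LinearMap.ker (lmulHom R z) ≤ LinearMap.ker (lmulHom R w) := by
          intro t ht
          have h1 : z * t = 0 := ht
          show w * t = 0
          rw [hwdef, mul_assoc, h1, mul_zero]
        have hwF : LinearMap.ker (lmulHom R w) ∈ F := by
          exact ⟨r * s₀, by rw [← hwform]; exact hw, by rw [hwform]⟩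
        have heq1 : LinearMap.ker (lmulHom R z) = LinearMap.ker (lmulHom R w) :=
          (lt_or_eq_of_le hker1).resolve_left (hAmax _ hwF)
        have hwkform : w^k = (w^(k-1) * (r * s₀)) * b₀ := by
          conv_lhs => rw [← hkk, pow_succ]
          rw [mul_assoc, ← hwform]
        have hker2 : LinearMap.ker (lmulHom R z) ≤ LinearMap.ker (lmulHom R (w^k)) := by
          rw [heq1]
          intro t ht
          have h1 : w * t = 0 := ht
          show w^k * t = 0
          calc w^k * t = w^(k-1) * (w * t) := by rw [← mul_assoc, ← pow_succ, hkk]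
          _ = 0 := by rw [h1, mul_zero]
        have hwkF : LinearMap.ker (lmulHom R (w^k)) ∈ F := by
          refine ⟨w^(k-1) * (r * s₀), ?_, by rw [← hwkform]⟩
          rw [← hwkform]; exact hwk
        have heq2 : LinearMap.ker (lmulHom R z) = LinearMap.ker (lmulHom R (w^k)) :=
          (lt_or_eq_of_le hker2).resolve_left (hAmax _ hwkF)
        have hwin : w ∈ LinearMap.ker (lmulHom R (w^k)) := by
          show w^k * w = 0
          rw [← pow_succ]
          exact hk
        rw [← heq2] at hwin
        have h1 : z * w = 0 := hwin
        rw [mul_assoc, ← hwdef, h1]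
    rcases hprime z z hzrz with h | h <;> exact hz0 h
  -- well-founded recursion
  have wf : WellFounded ((· > ·) : Submodule Rᵐᵒᵖ R → Submodule Rᵐᵒᵖ R → Prop) :=
    isNoetherian_iff.mp inferInstance
  have main : ∀ M : Submodule Rᵐᵒᵖ R, ∀ K : Submodule Rᵐᵒᵖ R, M ⊓ K = ⊥ →
      devLE d (Set.Icc K (⊤ : Submodule Rᵐᵒᵖ R)) →
      devLE d (Set.Icc (⊥ : Submodule Rᵐᵒᵖ R) (⊤ : Submodule Rᵐᵒᵖ R)) := by
    intro M
    induction M using WellFounded.induction wf with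
    | _ X IH =>
    intro K hXK hK
    by_cases hKbot : K = ⊥
    · rw [hKbot] at hK; exact hK
    · have hBne : K ⊓ N ≠ ⊥ := hess K hKbot
      have hF2ne : {A : Submodule Rᵐᵒᵖ R |
          ∃ y, y ∈ K ⊓ N ∧ (∀ k : ℕ, y^(k+1) ≠ 0) ∧ A = LinearMap.ker (lmulHom R y)}.Nonempty := by
        obtain ⟨z, hz1, hz2⟩ := hutumi (K ⊓ N) hBne
        exact ⟨_, z, hz1, hz2, rfl⟩
      obtain ⟨Am, hAmF, hAmax⟩ :=
        (set_has_maximal_iff_noetherian.mpr inferInstance) _ hF2ne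
      obtain ⟨z, hzB, hznn, rfl⟩ := hAmF
      have hz0 : z ≠ 0 := by
        intro h
        exact hznn 0 (by rw [zero_add, pow_one]; exact h)
      have hzK : z ∈ K := hzB.1
      have hzN : z ∈ N := hzB.2
      have hkerzz : LinearMap.ker (lmulHom R z) = LinearMap.ker (lmulHom R (z*z)) := by
        have hle' : LinearMap.ker (lmulHom R z) ≤ LinearMap.ker (lmulHom R (z*z)) := by
          intro t ht
          have h1 : z * t = 0 := ht
          show (z*z) * t = 0
          rw [mul_assoc, h1, mul_zero]
        have hzznn : ∀ k : ℕ, (z*z)^(k+1) ≠ 0 := by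
          intro k h
          apply hznn (2*k+1)
          have e : 2*(k+1) = 2*k+1+1 := by omega
          calc z^(2*k+1+1) = z^(2*(k+1)) := by rw [e]
          _ = (z^2)^(k+1) := pow_mul z 2 (k+1)
          _ = (z*z)^(k+1) := by rw [pow_two]
          _ = 0 := h
        have hmem : LinearMap.ker (lmulHom R (z*z)) ∈
            {A : Submodule Rᵐᵒᵖ R | ∃ y, y ∈ K ⊓ N ∧ (∀ k : ℕ, y^(k+1) ≠ 0) ∧
              A = LinearMap.ker (lmulHom R y)} :=
          ⟨z*z, mul_right_mem' hzB z, hzznn, rfl⟩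
        exact (lt_or_eq_of_le hle').resolve_left (hAmax _ hmem)
      have key : ∀ r : R, z * (z * r) = 0 → z * r = 0 := by
        intro r h
        have h1 : r ∈ LinearMap.ker (lmulHom R (z*z)) := by
          show (z*z) * r = 0
          rw [mul_assoc]; exact h
        rw [← hkerzz] at h1
        exact h1
      set K' := K ⊓ LinearMap.ker (lmulHom R z) with hK'def
      set M' := X ⊔ LinearMap.range (lmulHom R z) with hM'def
      have hzM' : z ∈ M' := by
        refine le_sup_right (a := X) ?_
        exact ⟨1, mul_one z⟩
      have hXM' : X < M' := by
        refine lt_of_le_of_ne le_sup_left (fun he => ?_)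
        have hzX : z ∈ X := by rw [he]; exact hzM'
        have hmem : z ∈ X ⊓ K := ⟨hzX, hzK⟩
        rw [hXK] at hmem
        exact hz0 (by simpa using hmem)
      have hM'K' : M' ⊓ K' = ⊥ := by
        rw [eq_bot_iff]
        intro x hx
        obtain ⟨hxM', hxK'⟩ := hx
        obtain ⟨mm, hmm, v, hv, rfl⟩ := Submodule.mem_sup.mp hxM'
        obtain ⟨rr, rfl⟩ := hv
        have hvK : (lmulHom R z) rr ∈ K := mul_right_mem' hzK rr
        have hmmK : mm ∈ K := by
          have hxK : mm + (lmulHom R z) rr ∈ K := hxK'.1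
          have := K.sub_mem hxK hvK
          simpa using this
        have hmm0 : mm = 0 := by
          have hmem : mm ∈ X ⊓ K := ⟨hmm, hmmK⟩
          rw [hXK] at hmem
          simpa using hmem
        have hker : z * (z * rr) = 0 := by
          have h2 := hxK'.2
          rw [hmm0, zero_add] at h2
          exact h2
        have h3 := key rr hker
        simp only [Submodule.mem_bot]
        rw [hmm0, zero_add]
        exact h3
      have hIccK' : devLE d (Set.Icc K' (⊤ : Submodule Rᵐᵒᵖ R)) := by
        have hrange : LinearMap.range (lmulHom R z) ≤ N := by
          rintro v ⟨y, rfl⟩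
          exact mul_right_mem' hzN y
        have h2 : devLE d (Set.Icc (LinearMap.ker (lmulHom R z)) (⊤ : Submodule Rᵐᵒᵖ R)) :=
          devIcc_map_ker d _ hrange hNS
        have h3 : devLE d (Set.Icc K' K) := devIcc_inf d K h2
        exact devLE_Icc_compose d inf_le_left le_top h3 hK
      exact IH M' hXM' K' hM'K' hIccK'
  have hfin : devLE d (Set.Icc (⊥ : Submodule Rᵐᵒᵖ R) (⊤ : Submodule Rᵐᵒᵖ R)) :=
    main ⊥ ⊤ (by simp) (devLE_Icc_self d ⊤)
  exact devLE_of_Icc_bot_top d hfin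

end Main

theorem stmt13 (R : Type) [Ring R] [Nontrivial R] [IsNoetherian Rᵐᵒᵖ R]
    (hprime : ∀ a b : R, (∀ r : R, a * r * b = 0) → a = 0 ∨ b = 0)
    (n m : ℕ) (hm : 0 < m) (hmn : m < n)
    (hdim : kdimLE R R n ∧ ¬ kdimLE R R (n - 1))
    (Q : Type) [Ring Q] (f : R →+* Q) (hQ : isRightQuotientRing R Q f) :
    ∀ c ∈ rCm R m, ∃ q ∈ reSet R Q f m, f c * q = 1 ∧ q * f c = 1 := by
  obtain ⟨hdimn, hdimn1⟩ := hdim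
  intro c hc
  have hc' : devLE (m-1) (Submodule Rᵐᵒᵖ (R ⧸ Submodule.span Rᵐᵒᵖ ({c} : Set R))) := hc
  have hmd : m - 1 ≤ n - 1 := by omega
  have hCtop : devLE (n-1) (Set.Icc (Submodule.span Rᵐᵒᵖ ({c} : Set R))
      (⊤ : Submodule Rᵐᵒᵖ R)) :=
    devLE_mono hmd (devIcc_of_quot (m-1) _ hc')
  have hCrange : Submodule.span Rᵐᵒᵖ ({c} : Set R) = LinearMap.range (lmulHom R c) :=
    span_singleton_eq_lmul_range c
  have hsmall : ∀ W : Submodule Rᵐᵒᵖ R, W ≠ ⊥ →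
      devLE (n-1) (Set.Icc (⊥ : Submodule Rᵐᵒᵖ R) W) → False := by
    intro W h1 h2
    exact hdimn1 (kdim_full_of_small_ideal hprime (n-1) W h1 h2)
  -- right regularity
  have hright : ∀ x : R, x * c = 0 → x = 0 := by
    intro x hx
    by_contra hx0
    have hWne : LinearMap.range (lmulHom R x) ≠ ⊥ := by
      intro h
      apply hx0
      have hmem : x ∈ LinearMap.range (lmulHom R x) := ⟨1, mul_one x⟩
      rw [h] at hmem
      simpa using hmem
    refine hsmall _ hWne (devIcc_comap (n-1) (lmulHom R x) ?_ le_rfl hCtop)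
    intro u hu
    rw [hCrange] at hu
    obtain ⟨y, rfl⟩ := hu
    simp only [Submodule.mem_comap, Submodule.mem_bot]
    show x * (c * y) = 0
    rw [← mul_assoc, hx, zero_mul]
  -- left regularity
  have hleft : ∀ x : R, c * x = 0 → x = 0 := by
    intro x hx
    by_contra hx0
    have hKne : LinearMap.ker (lmulHom R c) ≠ ⊥ := by
      intro h
      apply hx0
      have hmem : x ∈ LinearMap.ker (lmulHom R c) := hx
      rw [h] at hmem
      simpa using hmem
    have hP : ∀ i : ℕ, devLE (n-1)
        (Set.Icc (LinearMap.range ((lmulHom R c)^i)) (⊤ : Submodule Rᵐᵒᵖ R)) := by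
      intro i
      induction i with
      | zero =>
        have h0 : LinearMap.range ((lmulHom R c)^0) = (⊤ : Submodule Rᵐᵒᵖ R) := by
          rw [pow_zero]; exact LinearMap.range_eq_top.mpr (fun y => ⟨y, rfl⟩)
        rw [h0]
        exact devLE_Icc_self (n-1) ⊤
      | succ i ih =>
        have hstep : devLE (n-1) (Set.Icc (LinearMap.range ((lmulHom R c)^(i+1)))
            (LinearMap.range ((lmulHom R c)^i))) := by
          refine devIcc_comap (n-1) ((lmulHom R c)^i) ?_ le_rfl hCtop
          intro u hu
          rw [hCrange] at hu
          obtain ⟨y, rfl⟩ := hu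
          simp only [Submodule.mem_comap]
          exact ⟨y, by rw [pow_succ]; rfl⟩
        have hle' : LinearMap.range ((lmulHom R c)^(i+1)) ≤
            LinearMap.range ((lmulHom R c)^i) := by
          rintro v ⟨y, rfl⟩
          exact ⟨(lmulHom R c) y, by rw [pow_succ]; rfl⟩
        exact devLE_Icc_compose (n-1) hle' le_top hstep ih
    have hkermono : Monotone (fun i : ℕ => LinearMap.ker ((lmulHom R c)^i)) := by
      refine monotone_nat_of_le_succ (fun i => ?_)
      intro t ht
      have h1 : ((lmulHom R c)^i) t = 0 := ht
      show ((lmulHom R c)^(i+1)) t = 0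
      rw [pow_succ']
      show (lmulHom R c) (((lmulHom R c)^i) t) = 0
      rw [h1, map_zero]
    obtain ⟨t, ht⟩ := (monotone_stabilizes_iff_noetherian.mpr inferInstance)
      ⟨fun i : ℕ => LinearMap.ker ((lmulHom R c)^i), hkermono⟩
    have hdisj : LinearMap.ker (lmulHom R c) ⊓ LinearMap.range ((lmulHom R c)^t) = ⊥ := by
      rw [eq_bot_iff]
      rintro v ⟨hv1, y, rfl⟩
      have h1 : ((lmulHom R c)^(t+1)) y = 0 := by
        rw [pow_succ']
        exact hv1
      have h2 : y ∈ LinearMap.ker ((lmulHom R c)^t) := by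
        have he := ht (t+1) (Nat.le_succ t)
        show y ∈ (⟨fun i : ℕ => LinearMap.ker ((lmulHom R c)^i), hkermono⟩ : ℕ →o _) t
        rw [he]
        exact h1
      simpa using h2
    have hsm : devLE (n-1) (Set.Icc (⊥ : Submodule Rᵐᵒᵖ R) (LinearMap.ker (lmulHom R c))) := by
      have h4 := devIcc_inf (n-1) (LinearMap.ker (lmulHom R c)) (hP t)
      rwa [hdisj] at h4
    exact hsmall _ hKne hsm
  have hreg : regElem R c := ⟨hleft, hright⟩
  obtain ⟨u, hu⟩ := hQ.2.1 c hreg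
  refine ⟨(u⁻¹ : Qˣ), ⟨Submodule.span Rᵐᵒᵖ ({c} : Set R), hc, ?_⟩, ?_, ?_⟩
  · intro j hj
    rw [Submodule.mem_span_singleton] at hj
    obtain ⟨a, rfl⟩ := hj
    refine ⟨a.unop, ?_⟩
    show (u⁻¹ : Qˣ) * f (c * a.unop) = f a.unop
    rw [map_mul, ← hu, ← mul_assoc, Units.inv_mul, one_mul]
  · rw [← hu]; exact u.mul_inv
  · rw [← hu]; exact u.inv_mul
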